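/- Let A be a real symmetric positive definite N\times N matrix, b a vector, and x = A^{-1} b. For the conjugate gradient method with zero initial guess, the m-th iterate x_m satisfies \|x - x_m\|_A \leq 2 ((\sqrt{\kappa}-1)/(\sqrt{\kappa}+1))^m \|x\|_A, where \kappa = \lambda_{max}(A)/\lambda_{min}(A) and \|v\|_A = \sqrt{v^T A v}. -/

import Mathlib

open Matrix Polynomial

private lemma stmt5_T_half (t : ℝ) (ht : t ≠ 0) : ∀ n : ℕ,
    (Polynomial.Chebyshev.T ℝ (n : ℤ)).eval ((t + t⁻¹) / 2) = (t ^ n + t⁻¹ ^ n) / 2 := by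
  have key : ∀ n : ℕ,
      (Polynomial.Chebyshev.T ℝ (n : ℤ)).eval ((t + t⁻¹) / 2) = (t ^ n + t⁻¹ ^ n) / 2 ∧
      (Polynomial.Chebyshev.T ℝ ((n+1) : ℤ)).eval ((t + t⁻¹) / 2) = (t ^ (n+1) + t⁻¹ ^ (n+1)) / 2 := by
    intro n
    induction n with
    | zero => constructor <;> simp [Polynomial.Chebyshev.T_zero, Polynomial.Chebyshev.T_one]
    | succ k ih =>
      refine ⟨ih.2, ?_⟩
      push_cast
      rw [show ((k:ℤ)+1+1) = (k:ℤ) + 2 by ring, Polynomial.Chebyshev.T_add_two]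
      simp only [eval_sub, eval_mul, eval_ofNat, eval_X]
      rw [ih.2, ih.1]
      field_simp
      linear_combination (t⁻¹ ^ k * (t - t⁻¹)) * (mul_inv_cancel₀ ht)
  exact fun n => (key n).1

private lemma stmt5_natDegree_T_le : ∀ n : ℕ, (Polynomial.Chebyshev.T ℝ (n : ℤ)).natDegree ≤ n := by
  have key : ∀ n : ℕ, (Polynomial.Chebyshev.T ℝ (n : ℤ)).natDegree ≤ n ∧
      (Polynomial.Chebyshev.T ℝ ((n+1) : ℤ)).natDegree ≤ n + 1 := by
    intro n
    induction n with
    | zero => constructor <;> simp [Polynomial.Chebyshev.T_zero, Polynomial.Chebyshev.T_one]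
    | succ k ih =>
      refine ⟨ih.2, ?_⟩
      push_cast
      rw [show ((k:ℤ)+1+1) = (k:ℤ) + 2 by ring, Polynomial.Chebyshev.T_add_two]
      refine le_trans (natDegree_sub_le _ _) ?_
      simp only [sup_le_iff]
      constructor
      · refine le_trans (natDegree_mul_le) ?_
        have h1 : ((2 : ℝ[X]) * X).natDegree ≤ 1 := by
          refine le_trans (natDegree_mul_le) ?_
          simp
        have h2 := ih.2
        omega
      · exact le_trans ih.1 (by omega)
  exact fun n => (key n).1

private lemma stmt5_abs_T_le (s : ℝ) (h1 : -1 ≤ s) (h2 : s ≤ 1) (m : ℕ) :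
    |(Polynomial.Chebyshev.T ℝ (m : ℤ)).eval s| ≤ 1 := by
  have h := Polynomial.Chebyshev.T_real_cos (Real.arccos s) (m : ℤ)
  rw [Real.cos_arccos h1 h2] at h
  rw [h]
  exact Real.abs_cos_le_one _

private lemma stmt5_cheb_poly (a c : ℝ) (ha : 0 < a) (hac : a ≤ c) (m : ℕ) :
    ∃ p : ℝ[X], p.eval 0 = 1 ∧ p.natDegree ≤ m ∧
      ∀ t, a ≤ t → t ≤ c → |p.eval t| ≤
        2 * ((Real.sqrt (c / a) - 1) / (Real.sqrt (c / a) + 1)) ^ m := by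
  have hc : 0 < c := lt_of_lt_of_le ha hac
  have hsa : 0 < Real.sqrt a := Real.sqrt_pos.2 ha
  have hsc : 0 < Real.sqrt c := Real.sqrt_pos.2 hc
  have ha2 : Real.sqrt a ^ 2 = a := Real.sq_sqrt ha.le
  have hc2 : Real.sqrt c ^ 2 = c := Real.sq_sqrt hc.le
  have hsdiv : Real.sqrt (c / a) = Real.sqrt c / Real.sqrt a := by
    rw [Real.sqrt_div hc.le]
  have hr : (Real.sqrt (c / a) - 1) / (Real.sqrt (c / a) + 1)
      = (Real.sqrt c - Real.sqrt a) / (Real.sqrt c + Real.sqrt a) := by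
    rw [hsdiv]; field_simp
  rcases eq_or_lt_of_le hac with rfl | hlt
  · refine ⟨(1 - C a⁻¹ * X) ^ m, ?_, ?_, ?_⟩
    · simp
    · refine le_trans (natDegree_pow_le) ?_
      have : (1 - C a⁻¹ * X).natDegree ≤ 1 := by
        refine le_trans (natDegree_sub_le _ _) ?_
        simp [natDegree_C_mul_le]
        exact le_trans (natDegree_C_mul_le _ _) (by simp)
      nlinarith [this]
    · intro t h1 h2
      have ht : t = a := le_antisymm h2 h1
      subst ht
      have : Real.sqrt (t / t) = 1 := by rw [div_self (ne_of_gt ha)]; simp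
      rw [this]
      simp only [eval_pow, eval_sub, eval_one, eval_mul, eval_C, eval_X]
      rw [inv_mul_cancel₀ (ne_of_gt ha)]
      simp only [sub_self, abs_pow, abs_zero]
      rcases Nat.eq_zero_or_pos m with rfl | hm
      · norm_num
      · simp [zero_pow (Nat.pos_iff_ne_zero.mp hm)]
  · have hsalt : Real.sqrt a < Real.sqrt c := Real.sqrt_lt_sqrt ha.le hlt
    have hca : 0 < c - a := by linarith
    set t0 : ℝ := (Real.sqrt c + Real.sqrt a) / (Real.sqrt c - Real.sqrt a) with ht0
    have ht0pos : 0 < t0 := div_pos (by linarith) (by linarith)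
    have ht0ne : t0 ≠ 0 := ne_of_gt ht0pos
    set σ : ℝ := (c + a) / (c - a) with hσ
    have hne1 : Real.sqrt c - Real.sqrt a ≠ 0 := by
      intro h; nlinarith
    have hne2 : Real.sqrt c + Real.sqrt a ≠ 0 := by positivity
    have hσeq : σ = (t0 + t0⁻¹) / 2 := by
      rw [hσ, ht0, inv_div, div_add_div _ _ hne1 hne2]
      have key1 : (Real.sqrt c + Real.sqrt a) * (Real.sqrt c + Real.sqrt a)
          + (Real.sqrt c - Real.sqrt a) * (Real.sqrt c - Real.sqrt a) = 2 * (c + a) := by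
        nlinarith [ha2, hc2]
      have key2 : (Real.sqrt c - Real.sqrt a) * (Real.sqrt c + Real.sqrt a) = c - a := by
        nlinarith [ha2, hc2]
      rw [key1, key2]
      ring
    have hT : (Polynomial.Chebyshev.T ℝ (m : ℤ)).eval σ = (t0 ^ m + t0⁻¹ ^ m) / 2 := by
      rw [hσeq]; exact stmt5_T_half t0 ht0ne m
    have hTpos : 0 < (Polynomial.Chebyshev.T ℝ (m : ℤ)).eval σ := by
      rw [hT]; positivity
    have hTge : t0 ^ m / 2 ≤ (Polynomial.Chebyshev.T ℝ (m : ℤ)).eval σ := by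
      rw [hT]
      have : 0 < t0⁻¹ ^ m := by positivity
      linarith
    set Tσ := (Polynomial.Chebyshev.T ℝ (m : ℤ)).eval σ with hTσ
    refine ⟨C Tσ⁻¹ * (Polynomial.Chebyshev.T ℝ (m : ℤ)).comp (C σ - C (2 / (c - a)) * X),
      ?_, ?_, ?_⟩
    · simp only [eval_mul, eval_C, eval_comp, eval_sub, eval_mul, eval_X, mul_zero, sub_zero]
      exact inv_mul_cancel₀ (ne_of_gt hTpos)
    · refine le_trans (natDegree_C_mul_le _ _) (le_trans natDegree_comp_le ?_)
      have h1 : (C σ - C (2 / (c - a)) * X).natDegree ≤ 1 := by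
        refine le_trans (natDegree_sub_le _ _) ?_
        simp only [natDegree_C, sup_le_iff]
        exact ⟨Nat.zero_le _, le_trans (natDegree_C_mul_le _ _) (by simp)⟩
      calc (Polynomial.Chebyshev.T ℝ (m : ℤ)).natDegree * (C σ - C (2 / (c - a)) * X).natDegree
          ≤ m * 1 := Nat.mul_le_mul (stmt5_natDegree_T_le m) h1
        _ = m := by ring
    · intro t h1 h2
      simp only [eval_mul, eval_C, eval_comp, eval_sub, eval_mul, eval_X]
      have hre : σ - 2 / (c - a) * t = (c + a - 2 * t) / (c - a) := by
        rw [hσ]; field_simp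
      have hL1 : -1 ≤ σ - 2 / (c - a) * t := by
        rw [hre, le_div_iff₀ hca]; linarith
      have hL2 : σ - 2 / (c - a) * t ≤ 1 := by
        rw [hre, div_le_one hca]; linarith
      have hTb := stmt5_abs_T_le _ hL1 hL2 m
      rw [abs_mul, abs_inv, abs_of_pos hTpos]
      have step1 : Tσ⁻¹ * |eval (σ - 2 / (c - a) * t) (Polynomial.Chebyshev.T ℝ (m : ℤ))|
          ≤ Tσ⁻¹ := by
        have := inv_pos.mpr hTpos
        calc Tσ⁻¹ * |eval (σ - 2 / (c - a) * t) (Polynomial.Chebyshev.T ℝ (m : ℤ))|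
            ≤ Tσ⁻¹ * 1 := by gcongr
          _ = Tσ⁻¹ := mul_one _
      refine le_trans step1 ?_
      have hinv : Tσ⁻¹ ≤ 2 * (t0⁻¹) ^ m := by
        rw [inv_pow]
        have h2' : (0:ℝ) < t0 ^ m := by positivity
        have heq : (t0 ^ m / 2)⁻¹ = 2 * (t0 ^ m)⁻¹ := by
          field_simp
        rw [← heq]
        exact inv_anti₀ (by positivity) hTge
      refine le_trans hinv ?_
      have ht0inv : t0⁻¹ = (Real.sqrt (c / a) - 1) / (Real.sqrt (c / a) + 1) := by
        rw [hr, ht0, inv_div]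
      rw [ht0inv]

private lemma stmt5_sum_mulVec {N : ℕ} (s : Finset ℕ) (f : ℕ → Matrix (Fin N) (Fin N) ℝ)
    (b : Fin N → ℝ) : (∑ i ∈ s, f i) *ᵥ b = ∑ i ∈ s, (f i) *ᵥ b := by
  induction s using Finset.induction with
  | empty => simp [Matrix.zero_mulVec]
  | insert a s h ih => rw [Finset.sum_insert h, Finset.sum_insert h, Matrix.add_mulVec, ih]

private lemma stmt5_dot_U {N : ℕ} (U : Matrix (Fin N) (Fin N) ℝ) (hU : Uᵀ * U = 1)
    (v w : Fin N → ℝ) : (U *ᵥ v) ⬝ᵥ (U *ᵥ w) = v ⬝ᵥ w := by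
  rw [Matrix.dotProduct_mulVec, Matrix.vecMul_mulVec, hU, Matrix.vecMul_one]

/-- CG convergence: with `A` SPD, `x = A⁻¹ b`, and the `m`-th CG iterate
`x_m` characterized as the `A`-norm best approximation to `x` from the Krylov space
`K_m = span{b, Ab, …, A^{m-1}b}`, one has
`‖x - x_m‖_A ≤ 2 ((√κ - 1)/(√κ + 1))^m ‖x‖_A`, `κ = λ_max(A)/λ_min(A)`. -/
theorem stmt5 {N : ℕ} (A : Matrix (Fin N) (Fin N) ℝ) (hA : A.PosDef)
    (b x : Fin N → ℝ) (hx : A *ᵥ x = b) (m : ℕ)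
    (K : Submodule ℝ (Fin N → ℝ))
    (hK : K = Submodule.span ℝ (Set.range fun k : Fin m => (A ^ (k : ℕ)) *ᵥ b))
    (xm : Fin N → ℝ) (hxm : xm ∈ K)
    (hmin : ∀ y ∈ K, (x - xm) ⬝ᵥ (A *ᵥ (x - xm)) ≤ (x - y) ⬝ᵥ (A *ᵥ (x - y)))
    (κ : ℝ) (hκ : κ = (⨆ i, hA.1.eigenvalues i) / (⨅ i, hA.1.eigenvalues i)) :
    Real.sqrt ((x - xm) ⬝ᵥ (A *ᵥ (x - xm))) ≤
      2 * ((Real.sqrt κ - 1) / (Real.sqrt κ + 1)) ^ m * Real.sqrt (x ⬝ᵥ (A *ᵥ x)) := by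
  classical
  subst hκ
  -- trivial case m = 0
  rcases Nat.eq_zero_or_pos m with rfl | hm
  · have h0 := hmin 0 K.zero_mem
    rw [sub_zero] at h0
    have hs := Real.sqrt_le_sqrt h0
    refine le_trans hs ?_
    rw [pow_zero, mul_one]
    nlinarith [Real.sqrt_nonneg (x ⬝ᵥ (A *ᵥ x))]
  -- trivial case N = 0
  rcases Nat.eq_zero_or_pos N with rfl | hN
  · have h1 : ∀ v w : Fin 0 → ℝ, v ⬝ᵥ w = 0 := fun v w => by
      simp [dotProduct]
    rw [h1, h1, Real.sqrt_zero, mul_zero]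
  haveI : Nonempty (Fin N) := ⟨⟨0, hN⟩⟩
  set lam := hA.1.eigenvalues with hlam
  set la := ⨅ i, lam i with hla_def
  set lc := ⨆ i, lam i with hlc_def
  -- positivity of the smallest eigenvalue
  have hmem : sInf (Set.range lam) ∈ Set.range lam :=
    Set.Nonempty.csInf_mem (Set.range_nonempty lam) (Set.finite_range lam)
  obtain ⟨j, hj⟩ := hmem
  have hla : 0 < la := by
    have : la = sInf (Set.range lam) := rfl
    rw [this, ← hj]
    exact hA.eigenvalues_pos j
  have hia : ∀ i, la ≤ lam i := fun i => ciInf_le (Finite.bddBelow_range _) i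
  have hic : ∀ i, lam i ≤ lc := fun i => le_ciSup (Finite.bddAbove_range _) i
  have hac : la ≤ lc := (hia (Classical.arbitrary _)).trans (hic _)
  have hlam_pos : ∀ i, 0 < lam i := fun i => hA.eigenvalues_pos i
  -- the Chebyshev polynomial
  obtain ⟨p, hp0, hpdeg, hpb⟩ := stmt5_cheb_poly la lc hla hac m
  set B := 2 * ((Real.sqrt (lc / la) - 1) / (Real.sqrt (lc / la) + 1)) ^ m with hB
  have hBnn : 0 ≤ B := by
    have h1 : (1:ℝ) ≤ lc / la := (one_le_div hla).2 hac
    have h2 : (1:ℝ) ≤ Real.sqrt (lc / la) := Real.one_le_sqrt.2 h1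
    have : 0 ≤ (Real.sqrt (lc / la) - 1) / (Real.sqrt (lc / la) + 1) :=
      div_nonneg (by linarith) (by linarith)
    positivity
  -- spectral setup
  set U : Matrix (Fin N) (Fin N) ℝ := (hA.1.eigenvectorUnitary : Matrix (Fin N) (Fin N) ℝ)
    with hU_def
  have hU2 : U * star U = 1 := Matrix.mem_unitaryGroup_iff.mp (hA.1.eigenvectorUnitary).2
  have hUtU : Uᵀ * U = 1 := by
    have h1 := Matrix.mem_unitaryGroup_iff'.mp (hA.1.eigenvectorUnitary).2
    rw [Matrix.star_eq_conjTranspose, Matrix.conjTranspose_eq_transpose_of_trivial] at h1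
    exact h1
  have hAU : A * U = U * Matrix.diagonal lam := by
    have hD : Matrix.diagonal ((RCLike.ofReal ∘ hA.1.eigenvalues) : Fin N → ℝ)
        = Matrix.diagonal lam := by norm_cast
    have hsd : star U * A * U = Matrix.diagonal (RCLike.ofReal ∘ hA.1.eigenvalues) := by
      have h := hA.1.conjStarAlgAut_star_eigenvectorUnitary
      rw [Unitary.conjStarAlgAut_apply, Unitary.coe_star, star_star] at h
      exact h
    have h2 := congrArg (fun M => U * M) hsd
    simp only [← mul_assoc] at h2
    rw [show U * star U = 1 from hU2, one_mul] at h2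
    rw [h2, hD]
  set d : Fin N → ℝ := star U *ᵥ x with hd_def
  have hxd : x = U *ᵥ d := by
    rw [hd_def, Matrix.mulVec_mulVec, hU2, Matrix.one_mulVec]
  have hpow : ∀ n : ℕ, (A ^ n) *ᵥ x = U *ᵥ (fun i => lam i ^ n * d i) := by
    intro n
    induction n with
    | zero =>
      have hzz : (fun i => lam i ^ 0 * d i) = d := by
        funext i; rw [pow_zero, one_mul]
      rw [pow_zero, Matrix.one_mulVec, hxd, hzz]
    | succ k ih =>
      rw [pow_succ', ← Matrix.mulVec_mulVec, ih, Matrix.mulVec_mulVec, hAU,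
        ← Matrix.mulVec_mulVec]
      have hdiag : Matrix.diagonal lam *ᵥ (fun i => lam i ^ k * d i)
          = fun i => lam i ^ (k + 1) * d i := by
        funext i
        rw [Matrix.mulVec_diagonal]
        ring
      rw [hdiag]
  have key : ∀ r : ℝ[X], (Polynomial.aeval A r) *ᵥ x
      = U *ᵥ (fun i => r.eval (lam i) * d i) := by
    intro r
    induction r using Polynomial.induction_on' with
    | add u v hu hv =>
      have hvv : ((fun i => eval (lam i) u * d i) + fun i => eval (lam i) v * d i)
          = fun i => eval (lam i) (u + v) * d i := by
        funext i
        simp only [Pi.add_apply, eval_add]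
        ring
      rw [_root_.map_add, Matrix.add_mulVec, hu, hv, ← Matrix.mulVec_add, hvv]
    | monomial n r =>
      have hvv : (r • fun i => lam i ^ n * d i)
          = fun i => eval (lam i) ((monomial n) r) * d i := by
        funext i
        simp only [Pi.smul_apply, smul_eq_mul, eval_monomial]
        ring
      rw [aeval_monomial, Algebra.algebraMap_eq_smul_one, smul_mul_assoc, one_mul,
        Matrix.smul_mulVec, hpow n, ← Matrix.mulVec_smul, hvv]
  -- norms
  have hxAx : x ⬝ᵥ (A *ᵥ x) = ∑ i, lam i * d i ^ 2 := by
    have h1 : A *ᵥ x = U *ᵥ (fun i => lam i * d i) := by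
      have h := key X
      rw [aeval_X] at h
      simpa only [eval_X] using h
    rw [h1]
    nth_rewrite 1 [hxd]
    rw [stmt5_dot_U U hUtU]
    simp only [dotProduct]
    exact Finset.sum_congr rfl fun i _ => by ring
  have hvAv : ((Polynomial.aeval A p) *ᵥ x) ⬝ᵥ (A *ᵥ ((Polynomial.aeval A p) *ᵥ x))
      = ∑ i, lam i * (p.eval (lam i)) ^ 2 * d i ^ 2 := by
    have h1 : A *ᵥ ((Polynomial.aeval A p) *ᵥ x)
        = U *ᵥ (fun i => (X * p : ℝ[X]).eval (lam i) * d i) := by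
      rw [Matrix.mulVec_mulVec]
      have h2 : Polynomial.aeval A (X * p) = A * Polynomial.aeval A p := by
        rw [_root_.map_mul, aeval_X]
      rw [← h2, key]
    rw [h1, key p, stmt5_dot_U U hUtU]
    simp only [dotProduct, eval_mul, eval_X]
    exact Finset.sum_congr rfl fun i _ => by ring
  -- the polynomial error vector lies in the Krylov space
  set q : ℝ[X] := (1 - p).divX with hq_def
  have hq : X * q = 1 - p := by
    have h0 : (1 - p).coeff 0 = 0 := by
      rw [coeff_sub, coeff_one_zero, coeff_zero_eq_eval_zero, hp0, sub_self]
    have h := X_mul_divX_add (1 - p)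
    rwa [h0, map_zero, add_zero] at h
  have hqd : q.natDegree < m := by
    by_cases hq0 : q = 0
    · rw [hq0]
      simpa using hm
    · by_contra hcon
      push_neg at hcon
      have h1 : (1 - p).natDegree ≤ m := by
        refine le_trans (natDegree_sub_le _ _) ?_
        simp only [natDegree_one, sup_le_iff]
        exact ⟨Nat.zero_le _, hpdeg⟩
      have h2 : (1 - p).coeff (q.natDegree + 1) = 0 :=
        coeff_eq_zero_of_natDegree_lt (by omega)
      rw [← hq, coeff_X_mul] at h2
      exact hq0 (leadingCoeff_eq_zero.mp h2)
  have hy : x - (Polynomial.aeval A p) *ᵥ x = (Polynomial.aeval A q) *ᵥ b := by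
    have h1 : Polynomial.aeval A q * A = 1 - Polynomial.aeval A p := by
      have hqX : (q * X : ℝ[X]) = 1 - p := by rw [mul_comm, hq]
      calc Polynomial.aeval A q * A = Polynomial.aeval A (q * X) := by rw [_root_.map_mul, aeval_X]
        _ = Polynomial.aeval A (1 - p) := by rw [hqX]
        _ = 1 - Polynomial.aeval A p := by rw [_root_.map_sub, _root_.map_one]
    calc x - Polynomial.aeval A p *ᵥ x
        = (1 - Polynomial.aeval A p) *ᵥ x := by rw [Matrix.sub_mulVec, Matrix.one_mulVec]
      _ = (Polynomial.aeval A q * A) *ᵥ x := by rw [h1]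
      _ = Polynomial.aeval A q *ᵥ (A *ᵥ x) := (Matrix.mulVec_mulVec x _ A).symm
      _ = Polynomial.aeval A q *ᵥ b := by rw [hx]
  have hyK : x - (Polynomial.aeval A p) *ᵥ x ∈ K := by
    rw [hy, hK]
    have h3 : (Polynomial.aeval A q) *ᵥ b
        = ∑ i ∈ Finset.range m, q.coeff i • ((A ^ i) *ᵥ b) := by
      rw [Polynomial.aeval_eq_sum_range' hqd A, stmt5_sum_mulVec]
      exact Finset.sum_congr rfl fun i _ => Matrix.smul_mulVec _ _ _
    rw [h3]
    refine Submodule.sum_mem _ fun i hi => Submodule.smul_mem _ _ (Submodule.subset_span ?_)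
    exact ⟨⟨i, Finset.mem_range.mp hi⟩, rfl⟩
  -- main chain of inequalities
  have hchain : (x - xm) ⬝ᵥ (A *ᵥ (x - xm)) ≤ B ^ 2 * (x ⬝ᵥ (A *ᵥ x)) := by
    refine le_trans (hmin _ hyK) ?_
    rw [sub_sub_cancel, hvAv, hxAx, Finset.mul_sum]
    refine Finset.sum_le_sum fun i _ => ?_
    have hpb_i := hpb (lam i) (hia i) (hic i)
    have hsq : (p.eval (lam i)) ^ 2 ≤ B ^ 2 := by
      have := pow_le_pow_left₀ (abs_nonneg (p.eval (lam i))) hpb_i 2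
      rwa [sq_abs] at this
    have h3 : 0 ≤ lam i * d i ^ 2 := by
      have := (hlam_pos i).le
      positivity
    calc lam i * (p.eval (lam i)) ^ 2 * d i ^ 2
        = (p.eval (lam i)) ^ 2 * (lam i * d i ^ 2) := by ring
      _ ≤ B ^ 2 * (lam i * d i ^ 2) := mul_le_mul_of_nonneg_right hsq h3
  calc Real.sqrt ((x - xm) ⬝ᵥ (A *ᵥ (x - xm)))
      ≤ Real.sqrt (B ^ 2 * (x ⬝ᵥ (A *ᵥ x))) := Real.sqrt_le_sqrt hchain
    _ = B * Real.sqrt (x ⬝ᵥ (A *ᵥ x)) := by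
        rw [Real.sqrt_mul (sq_nonneg B), Real.sqrt_sq hBnn]
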